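/- Let T₁, T₂ be topologies (quasi-orders) on disjoint finite sets X₁, X₂, and let T₁T₂ denote the disjoint-union quasi-order on X₁ ⊔ X₂. Then a topology T on X₁ ⊔ X₂ satisfies T ≺○ T₁T₂ if and only if T = T₁'T₂' for topologies T₁' ≺○ T₁ on X₁ and T₂' ≺○ T₂ on X₂ (necessarily Tᵢ' = T|_{Xᵢ}). -/

import Mathlib

/-- The quotient quasi-order `T/T'`: transitive closure of `x R y ⟺ x ≤_T y ∨ y ≤_{T'} x`. -/
def quotRel {α : Type*} (le le' : α → α → Prop) : α → α → Prop :=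
  Relation.TransGen (fun x y => le x y ∨ le' y x)

/-- A subset `Y` is connected for the topology corresponding to the quasi-order `le'`. -/
def connectedFor {α : Type*} (le' : α → α → Prop) (Y : Set α) : Prop :=
  Y.Nonempty ∧ ∀ x ∈ Y, ∀ y ∈ Y,
    Relation.ReflTransGen (fun a b => a ∈ Y ∧ b ∈ Y ∧ (le' a b ∨ le' b a)) x y

/-- `T' ≺○ T`. -/
def finerCirc {α : Type*} (le' le : α → α → Prop) : Prop :=
  (∀ x y, le' x y → le x y) ∧
  (∀ Y : Set α, connectedFor le' Y → ∀ x ∈ Y, ∀ y ∈ Y, (le' x y ↔ le x y)) ∧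
  (∀ x y, (quotRel le le' x y ∧ quotRel le le' y x) ↔
          (quotRel le' le' x y ∧ quotRel le' le' y x))

/-- The disjoint-union quasi-order `T₁T₂` on `X₁ ⊕ X₂`: each `Tᵢ` on its component, and no
relations between the two components. -/
def prodLe {X₁ X₂ : Type*} (le₁ : X₁ → X₁ → Prop) (le₂ : X₂ → X₂ → Prop) :
    X₁ ⊕ X₂ → X₁ ⊕ X₂ → Prop
  | Sum.inl a, Sum.inl b => le₁ a b
  | Sum.inr a, Sum.inr b => le₂ a b
  | Sum.inl _, Sum.inr _ => False
  | Sum.inr _, Sum.inl _ => False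

namespace FCP

lemma transGen_congr {α : Type*} {r s : α → α → Prop} (h : ∀ a b, r a b ↔ s a b) {a b : α} :
    Relation.TransGen r a b ↔ Relation.TransGen s a b :=
  ⟨fun hh => Relation.TransGen.mono (fun a b => (h a b).1) _ _ hh,
    fun hh => Relation.TransGen.mono (fun a b => (h a b).2) _ _ hh⟩

variable {X₁ X₂ : Type*}

def compOK (R : X₁ ⊕ X₂ → X₁ ⊕ X₂ → Prop) : Prop :=
  ∀ x y, R x y → x.isLeft = y.isLeft

lemma compOK_prodLe (A : X₁ → X₁ → Prop) (B : X₂ → X₂ → Prop) : compOK (prodLe A B) := by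
  rintro (x | x) (y | y) h <;> first | rfl | exact h.elim

lemma transGen_isLeft {R : X₁ ⊕ X₂ → X₁ ⊕ X₂ → Prop} (h : compOK R) {x y}
    (ht : Relation.TransGen R x y) : x.isLeft = y.isLeft := by
  induction ht with
  | single h' => exact h _ _ h'
  | tail _ h' ih => exact ih.trans (h _ _ h')

lemma reflTransGen_isLeft {R : X₁ ⊕ X₂ → X₁ ⊕ X₂ → Prop} (h : compOK R) {x y}
    (ht : Relation.ReflTransGen R x y) : x.isLeft = y.isLeft := by
  induction ht with
  | refl => rfl
  | tail _ h' ih => exact ih.trans (h _ _ h')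

lemma transGen_inl {R : X₁ ⊕ X₂ → X₁ ⊕ X₂ → Prop} (h : compOK R) {a b : X₁} :
    Relation.TransGen R (Sum.inl a) (Sum.inl b) ↔
      Relation.TransGen (fun u v => R (Sum.inl u) (Sum.inl v)) a b := by
  constructor
  · intro ht
    have key : ∀ {x y}, Relation.TransGen R x y → ∀ a b, x = Sum.inl a → y = Sum.inl b →
        Relation.TransGen (fun u v => R (Sum.inl u) (Sum.inl v)) a b := by
      intro x y ht
      induction ht with
      | single h' =>
        intro a b hx hy; subst hx; subst hy; exact Relation.TransGen.single h'
      | @tail m z hxm hmz ih =>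
        intro a b hx hz
        subst hx; subst hz
        have hm : m.isLeft = true := by
          have := transGen_isLeft h hxm; simpa using this.symm
        obtain ⟨c, rfl⟩ : ∃ c, m = Sum.inl c := by
          cases m with
          | inl c => exact ⟨c, rfl⟩
          | inr c => simp at hm
        exact (ih a c rfl rfl).tail hmz
    exact key ht a b rfl rfl
  · intro ht
    exact Relation.TransGen.lift Sum.inl (fun _ _ hh => hh) _ _ ht

lemma transGen_inr {R : X₁ ⊕ X₂ → X₁ ⊕ X₂ → Prop} (h : compOK R) {a b : X₂} :
    Relation.TransGen R (Sum.inr a) (Sum.inr b) ↔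
      Relation.TransGen (fun u v => R (Sum.inr u) (Sum.inr v)) a b := by
  constructor
  · intro ht
    have key : ∀ {x y}, Relation.TransGen R x y → ∀ a b, x = Sum.inr a → y = Sum.inr b →
        Relation.TransGen (fun u v => R (Sum.inr u) (Sum.inr v)) a b := by
      intro x y ht
      induction ht with
      | single h' =>
        intro a b hx hy; subst hx; subst hy; exact Relation.TransGen.single h'
      | @tail m z hxm hmz ih =>
        intro a b hx hz
        subst hx; subst hz
        have hm : m.isLeft = false := by
          have := transGen_isLeft h hxm; simpa using this.symm
        obtain ⟨c, rfl⟩ : ∃ c, m = Sum.inr c := by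
          cases m with
          | inl c => simp at hm
          | inr c => exact ⟨c, rfl⟩
        exact (ih a c rfl rfl).tail hmz
    exact key ht a b rfl rfl
  · intro ht
    exact Relation.TransGen.lift Sum.inr (fun _ _ hh => hh) _ _ ht

lemma reflTransGen_inl {R : X₁ ⊕ X₂ → X₁ ⊕ X₂ → Prop} (h : compOK R) {a b : X₁} :
    Relation.ReflTransGen R (Sum.inl a) (Sum.inl b) →
      Relation.ReflTransGen (fun u v => R (Sum.inl u) (Sum.inl v)) a b := by
  intro ht
  have key : ∀ {x y}, Relation.ReflTransGen R x y → ∀ a b, x = Sum.inl a → y = Sum.inl b →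
      Relation.ReflTransGen (fun u v => R (Sum.inl u) (Sum.inl v)) a b := by
    intro x y ht
    induction ht with
    | refl =>
      intro a b hx hy
      subst hx
      cases hy
      exact Relation.ReflTransGen.refl
    | @tail m z hxm hmz ih =>
      intro a b hx hz
      subst hx; subst hz
      have hm : m.isLeft = true := by
        have := reflTransGen_isLeft h hxm; simpa using this.symm
      obtain ⟨c, rfl⟩ : ∃ c, m = Sum.inl c := by
        cases m with
        | inl c => exact ⟨c, rfl⟩
        | inr c => simp at hm
      exact (ih a c rfl rfl).tail hmz
  exact key ht a b rfl rfl

lemma reflTransGen_inr {R : X₁ ⊕ X₂ → X₁ ⊕ X₂ → Prop} (h : compOK R) {a b : X₂} :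
    Relation.ReflTransGen R (Sum.inr a) (Sum.inr b) →
      Relation.ReflTransGen (fun u v => R (Sum.inr u) (Sum.inr v)) a b := by
  intro ht
  have key : ∀ {x y}, Relation.ReflTransGen R x y → ∀ a b, x = Sum.inr a → y = Sum.inr b →
      Relation.ReflTransGen (fun u v => R (Sum.inr u) (Sum.inr v)) a b := by
    intro x y ht
    induction ht with
    | refl =>
      intro a b hx hy
      subst hx
      cases hy
      exact Relation.ReflTransGen.refl
    | @tail m z hxm hmz ih =>
      intro a b hx hz
      subst hx; subst hz
      have hm : m.isLeft = false := by
        have := reflTransGen_isLeft h hxm; simpa using this.symm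
      obtain ⟨c, rfl⟩ : ∃ c, m = Sum.inr c := by
        cases m with
        | inl c => simp at hm
        | inr c => exact ⟨c, rfl⟩
      exact (ih a c rfl rfl).tail hmz
  exact key ht a b rfl rfl

end FCP

/-- A topology (quasi-order) `T` on `X₁ ⊔ X₂` satisfies `T ≺○ T₁T₂` iff `T = T₁'T₂'` for
topologies `T₁' ≺○ T₁` and `T₂' ≺○ T₂` (necessarily `Tᵢ' = T|_{Xᵢ}`). -/
theorem finerCirc_prod_iff {X₁ X₂ : Type*} [Fintype X₁] [Fintype X₂]
    (le₁ : X₁ → X₁ → Prop) (hrefl₁ : ∀ x, le₁ x x)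
    (htrans₁ : ∀ x y z, le₁ x y → le₁ y z → le₁ x z)
    (le₂ : X₂ → X₂ → Prop) (hrefl₂ : ∀ x, le₂ x x)
    (htrans₂ : ∀ x y z, le₂ x y → le₂ y z → le₂ x z)
    (le : X₁ ⊕ X₂ → X₁ ⊕ X₂ → Prop) (hrefl : ∀ x, le x x)
    (htrans : ∀ x y z, le x y → le y z → le x z) :
    finerCirc le (prodLe le₁ le₂) ↔
      ∃ (le₁' : X₁ → X₁ → Prop) (le₂' : X₂ → X₂ → Prop),
        (∀ x, le₁' x x) ∧ (∀ x y z, le₁' x y → le₁' y z → le₁' x z) ∧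
        (∀ x, le₂' x x) ∧ (∀ x y z, le₂' x y → le₂' y z → le₂' x z) ∧
        finerCirc le₁' le₁ ∧ finerCirc le₂' le₂ ∧
        (∀ x y, le x y ↔ prodLe le₁' le₂' x y) ∧
        (∀ a b : X₁, le₁' a b ↔ le (Sum.inl a) (Sum.inl b)) ∧
        (∀ a b : X₂, le₂' a b ↔ le (Sum.inr a) (Sum.inr b)) := by
  constructor
  · rintro ⟨h1, h2, h3⟩
    have hcle : FCP.compOK le := fun x y h => FCP.compOK_prodLe le₁ le₂ x y (h1 x y h)
    have hcR : FCP.compOK (fun u v => prodLe le₁ le₂ u v ∨ le v u) := by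
      rintro x y (h | h)
      · exact FCP.compOK_prodLe le₁ le₂ x y h
      · exact (hcle _ _ h).symm
    have hcS : FCP.compOK (fun u v => le u v ∨ le v u) := by
      rintro x y (h | h)
      · exact hcle _ _ h
      · exact (hcle _ _ h).symm
    refine ⟨fun a b => le (Sum.inl a) (Sum.inl b), fun a b => le (Sum.inr a) (Sum.inr b),
      fun a => hrefl _, fun a b c => htrans _ _ _, fun a => hrefl _, fun a b c => htrans _ _ _,
      ⟨fun a b h => h1 _ _ h, ?_, ?_⟩, ⟨fun a b h => h1 _ _ h, ?_, ?_⟩, ?_,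
      fun a b => Iff.rfl, fun a b => Iff.rfl⟩
    · -- connectedness condition on X₁
      intro Y hY x hx y hy
      have hconn : connectedFor le (Sum.inl '' Y) := by
        refine ⟨hY.1.image _, ?_⟩
        rintro u ⟨a, ha, rfl⟩ v ⟨b, hb, rfl⟩
        refine Relation.ReflTransGen.lift Sum.inl ?_ _ _ (hY.2 a ha b hb)
        rintro p q ⟨hp, hq, hpq⟩
        exact ⟨⟨p, hp, rfl⟩, ⟨q, hq, rfl⟩, hpq⟩
      exact h2 _ hconn _ ⟨x, hx, rfl⟩ _ ⟨y, hy, rfl⟩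
    · -- quotient condition on X₁
      intro a b
      have q1 : ∀ a b : X₁, quotRel (prodLe le₁ le₂) le (Sum.inl a) (Sum.inl b) ↔
          quotRel le₁ (fun u v => le (Sum.inl u) (Sum.inl v)) a b :=
        fun a b => FCP.transGen_inl hcR
      have q2 : ∀ a b : X₁, quotRel le le (Sum.inl a) (Sum.inl b) ↔
          quotRel (fun u v => le (Sum.inl u) (Sum.inl v))
            (fun u v => le (Sum.inl u) (Sum.inl v)) a b :=
        fun a b => FCP.transGen_inl hcS
      exact ((q1 a b).symm.and (q1 b a).symm).trans
        ((h3 (Sum.inl a) (Sum.inl b)).trans ((q2 a b).and (q2 b a)))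
    · -- connectedness condition on X₂
      intro Y hY x hx y hy
      have hconn : connectedFor le (Sum.inr '' Y) := by
        refine ⟨hY.1.image _, ?_⟩
        rintro u ⟨a, ha, rfl⟩ v ⟨b, hb, rfl⟩
        refine Relation.ReflTransGen.lift Sum.inr ?_ _ _ (hY.2 a ha b hb)
        rintro p q ⟨hp, hq, hpq⟩
        exact ⟨⟨p, hp, rfl⟩, ⟨q, hq, rfl⟩, hpq⟩
      exact h2 _ hconn _ ⟨x, hx, rfl⟩ _ ⟨y, hy, rfl⟩
    · -- quotient condition on X₂
      intro a b
      have q1 : ∀ a b : X₂, quotRel (prodLe le₁ le₂) le (Sum.inr a) (Sum.inr b) ↔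
          quotRel le₂ (fun u v => le (Sum.inr u) (Sum.inr v)) a b :=
        fun a b => FCP.transGen_inr hcR
      have q2 : ∀ a b : X₂, quotRel le le (Sum.inr a) (Sum.inr b) ↔
          quotRel (fun u v => le (Sum.inr u) (Sum.inr v))
            (fun u v => le (Sum.inr u) (Sum.inr v)) a b :=
        fun a b => FCP.transGen_inr hcS
      exact ((q1 a b).symm.and (q1 b a).symm).trans
        ((h3 (Sum.inr a) (Sum.inr b)).trans ((q2 a b).and (q2 b a)))
    · -- le = prodLe le₁' le₂'
      rintro (x | x) (y | y)
      · exact Iff.rfl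
      · exact ⟨fun h => h1 _ _ h, fun h => h.elim⟩
      · exact ⟨fun h => h1 _ _ h, fun h => h.elim⟩
      · exact Iff.rfl
  · rintro ⟨le₁', le₂', hr1, ht1', hr2, ht2', ⟨f11, f12, f13⟩, ⟨f21, f22, f23⟩, hle, hE1, hE2⟩
    have hcle : FCP.compOK le := fun x y h =>
      FCP.compOK_prodLe le₁' le₂' x y ((hle x y).1 h)
    have hcR : FCP.compOK (fun u v => prodLe le₁ le₂ u v ∨ le v u) := by
      rintro x y (h | h)
      · exact FCP.compOK_prodLe le₁ le₂ x y h
      · exact (hcle _ _ h).symm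
    have hcS : FCP.compOK (fun u v => le u v ∨ le v u) := by
      rintro x y (h | h)
      · exact hcle _ _ h
      · exact (hcle _ _ h).symm
    refine ⟨?_, ?_, ?_⟩
    · -- le x y → prodLe le₁ le₂ x y
      rintro (x | x) (y | y) h
      · exact f11 _ _ ((hle _ _).1 h)
      · exact ((hle _ _).1 h).elim
      · exact ((hle _ _).1 h).elim
      · exact f21 _ _ ((hle _ _).1 h)
    · -- connectedness
      intro Y hY x hx y hy
      obtain ⟨y₀, hy₀⟩ := hY.1
      have hcS' : FCP.compOK (fun u v => u ∈ Y ∧ v ∈ Y ∧ (le u v ∨ le v u)) := by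
        rintro u v ⟨-, -, (h | h)⟩
        · exact hcle _ _ h
        · exact (hcle _ _ h).symm
      have hsame : ∀ z ∈ Y, z.isLeft = y₀.isLeft := fun z hz =>
        FCP.reflTransGen_isLeft hcS' (hY.2 z hz y₀ hy₀)
      cases y₀ with
      | inl a₀ =>
        have hYl : ∀ z ∈ Y, ∃ a, z = Sum.inl a := by
          intro z hz
          have := hsame z hz
          cases z with
          | inl a => exact ⟨a, rfl⟩
          | inr a => simp at this
        have hconn : connectedFor le₁' {a | Sum.inl a ∈ Y} := by
          refine ⟨⟨a₀, hy₀⟩, ?_⟩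
          intro u hu v hv
          refine Relation.ReflTransGen.mono ?_ _ _ (FCP.reflTransGen_inl hcS' (hY.2 _ hu _ hv))
          rintro p q ⟨hp, hq, hpq⟩
          refine ⟨hp, hq, ?_⟩
          rcases hpq with h | h
          · exact Or.inl ((hle _ _).1 h)
          · exact Or.inr ((hle _ _).1 h)
        have key := f12 _ hconn
        obtain ⟨x', rfl⟩ := hYl x hx
        obtain ⟨y', rfl⟩ := hYl y hy
        have h := key x' hx y' hy
        rw [hle]
        exact h
      | inr a₀ =>
        have hYr : ∀ z ∈ Y, ∃ a, z = Sum.inr a := by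
          intro z hz
          have := hsame z hz
          cases z with
          | inl a => simp at this
          | inr a => exact ⟨a, rfl⟩
        have hconn : connectedFor le₂' {a | Sum.inr a ∈ Y} := by
          refine ⟨⟨a₀, hy₀⟩, ?_⟩
          intro u hu v hv
          refine Relation.ReflTransGen.mono ?_ _ _ (FCP.reflTransGen_inr hcS' (hY.2 _ hu _ hv))
          rintro p q ⟨hp, hq, hpq⟩
          refine ⟨hp, hq, ?_⟩
          rcases hpq with h | h
          · exact Or.inl ((hle _ _).1 h)
          · exact Or.inr ((hle _ _).1 h)
        have key := f22 _ hconn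
        obtain ⟨x', rfl⟩ := hYr x hx
        obtain ⟨y', rfl⟩ := hYr y hy
        have h := key x' hx y' hy
        rw [hle]
        exact h
    · -- quotient condition
      have q1l : ∀ a b : X₁, quotRel (prodLe le₁ le₂) le (Sum.inl a) (Sum.inl b) ↔
          quotRel le₁ le₁' a b := fun a b =>
        (FCP.transGen_inl hcR).trans (FCP.transGen_congr fun u v => or_congr Iff.rfl (hle _ _))
      have q2l : ∀ a b : X₁, quotRel le le (Sum.inl a) (Sum.inl b) ↔
          quotRel le₁' le₁' a b := fun a b =>
        (FCP.transGen_inl hcS).trans (FCP.transGen_congr fun u v => or_congr (hle _ _) (hle _ _))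
      have q1r : ∀ a b : X₂, quotRel (prodLe le₁ le₂) le (Sum.inr a) (Sum.inr b) ↔
          quotRel le₂ le₂' a b := fun a b =>
        (FCP.transGen_inr hcR).trans (FCP.transGen_congr fun u v => or_congr Iff.rfl (hle _ _))
      have q2r : ∀ a b : X₂, quotRel le le (Sum.inr a) (Sum.inr b) ↔
          quotRel le₂' le₂' a b := fun a b =>
        (FCP.transGen_inr hcS).trans (FCP.transGen_congr fun u v => or_congr (hle _ _) (hle _ _))
      rintro (x | x) (y | y)
      · exact ((q1l x y).and (q1l y x)).trans
          ((f13 x y).trans ((q2l x y).and (q2l y x)).symm)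
      · constructor
        · rintro ⟨h', -⟩; exact absurd (FCP.transGen_isLeft hcR h') (by simp)
        · rintro ⟨h', -⟩; exact absurd (FCP.transGen_isLeft hcS h') (by simp)
      · constructor
        · rintro ⟨h', -⟩; exact absurd (FCP.transGen_isLeft hcR h') (by simp)
        · rintro ⟨h', -⟩; exact absurd (FCP.transGen_isLeft hcS h') (by simp)
      · exact ((q1r x y).and (q1r y x)).trans
          ((f23 x y).trans ((q2r x y).and (q2r y x)).symm)
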